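/- Let ψ_t(x) = h(h⁻¹(1-t) ⋆ h⁻¹(x)) - (1-t) for x ∈ [0,1]. Then ψ_t is convex on [0,1], ψ_t(0) = 0, ψ_t(1) = t, and hence ψ_t(x) ≤ t·x for all x ∈ [0,1]. -/

import Mathlib

/-- Binary entropy function (base-2 logarithms). -/
noncomputable def hbin (x : ℝ) : ℝ := -x * Real.logb 2 x - (1 - x) * Real.logb 2 (1 - x)

/-- Binary convolution `a ⋆ b = a(1-b) + b(1-a)`. -/
def bconv (a b : ℝ) : ℝ := a * (1 - b) + b * (1 - a)

open Real Set

noncomputable def Afn (w : ℝ) : ℝ := Real.log (1+w) - Real.log (1-w)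

lemma Afn_hasDerivAt {w : ℝ} (h1 : -1 < w) (h2 : w < 1) :
    HasDerivAt Afn ((1+w)⁻¹ + (1-w)⁻¹) w := by
  have hp : (1:ℝ) + w ≠ 0 := by linarith
  have hm : (1:ℝ) - w ≠ 0 := by linarith
  have d1 : HasDerivAt (fun w : ℝ => Real.log (1+w)) ((1+w)⁻¹) w := by
    have := (Real.hasDerivAt_log hp).comp w ((hasDerivAt_id w).const_add 1)
    simpa [Function.comp_def] using this
  have d2 : HasDerivAt (fun w : ℝ => Real.log (1-w)) (-(1-w)⁻¹) w := by
    have := (Real.hasDerivAt_log hm).comp w ((hasDerivAt_id w).neg.const_add 1)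
    simpa [Function.comp_def] using this
  have := d1.sub d2; rw [sub_neg_eq_add] at this; exact this

lemma Afn_zero : Afn 0 = 0 := by simp [Afn]

lemma Afn_lower {w : ℝ} (h0 : 0 ≤ w) (h1 : w < 1) : 2*w ≤ (1+w^2) * Afn w := by
  set r : ℝ → ℝ := fun w => Afn w - 2*w/(1+w^2) with hr
  have hd : ∀ x ∈ Ioo (-1:ℝ) 1, HasDerivAt r
      ((1+x)⁻¹ + (1-x)⁻¹ - (2*(1+x^2) - 2*x*(2*x))/(1+x^2)^2) x := by
    intro x hx
    have h2 : (1:ℝ) + x^2 ≠ 0 := by positivity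
    exact (Afn_hasDerivAt hx.1 hx.2).sub
      ((((hasDerivAt_id x).const_mul 2).div
        (((hasDerivAt_pow 2 x).const_add 1)) h2).congr_deriv (by simp only [id_eq]; ring))
  have hmono : MonotoneOn r (Ico (0:ℝ) 1) := by
    apply monotoneOn_of_deriv_nonneg (convex_Ico 0 1)
    · intro x hx
      exact ((hd x ⟨by linarith [hx.1], hx.2⟩).differentiableAt).continuousAt.continuousWithinAt
    · rw [interior_Ico]
      intro x hx
      exact ((hd x ⟨by linarith [hx.1], hx.2⟩).differentiableAt).differentiableWithinAt
    · rw [interior_Ico]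
      intro x hx
      rw [(hd x ⟨by linarith [hx.1], hx.2⟩).deriv]
      have hxm : (0:ℝ) < 1 - x^2 := by nlinarith [hx.1, hx.2]
      have h2 : (0:ℝ) < (1+x^2)^2 := by positivity
      have e1 : (1+x)⁻¹ + (1-x)⁻¹ = 2/(1-x^2) := by
        rw [inv_eq_one_div, inv_eq_one_div]
        rw [div_add_div _ _ (by nlinarith : (1:ℝ)+x ≠ 0) (by nlinarith : (1:ℝ)-x ≠ 0)]
        ring_nf
      rw [e1]
      rw [sub_nonneg, div_le_div_iff₀ h2 hxm]
      nlinarith [sq_nonneg x, sq_nonneg (x^2)]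
  have h00 : r 0 = 0 := by simp [hr, Afn_zero]
  have := hmono (by constructor <;> norm_num : (0:ℝ) ∈ Ico (0:ℝ) 1) ⟨h0, h1⟩ h0
  rw [h00] at this
  have hpos : (0:ℝ) < 1 + w^2 := by positivity
  have : 2*w/(1+w^2) ≤ Afn w := by simpa [hr] using this
  calc 2*w = (1+w^2) * (2*w/(1+w^2)) := by field_simp
    _ ≤ (1+w^2) * Afn w := by
        exact mul_le_mul_of_nonneg_left this (le_of_lt hpos)

lemma q_antitone : AntitoneOn (fun w => (1-w^2) * Afn w / w) (Ioo (0:ℝ) 1) := by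
  have hd : ∀ x ∈ Ioo (0:ℝ) 1, HasDerivAt (fun w => (1-w^2) * Afn w / w)
      ((((-(2*x)) * Afn x + (1-x^2) * ((1+x)⁻¹ + (1-x)⁻¹)) * x - (1-x^2) * Afn x * 1)/x^2) x := by
    intro x hx
    have hx0 : x ≠ 0 := ne_of_gt hx.1
    have dn : HasDerivAt (fun w => (1-w^2) * Afn w)
        ((-(2*x)) * Afn x + (1-x^2) * ((1+x)⁻¹ + (1-x)⁻¹)) x := by
      have d1 : HasDerivAt (fun w : ℝ => 1 - w^2) (-(2*x)) x := by
        simpa using ((hasDerivAt_pow 2 x).const_sub 1)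
      exact d1.mul (Afn_hasDerivAt (by linarith [hx.1]) hx.2)
    exact dn.div (hasDerivAt_id x) hx0
  apply antitoneOn_of_deriv_nonpos (convex_Ioo 0 1)
  · intro x hx
    exact ((hd x hx).differentiableAt).continuousAt.continuousWithinAt
  · rw [interior_Ioo]
    intro x hx
    exact ((hd x hx).differentiableAt).differentiableWithinAt
  · rw [interior_Ioo]
    intro x hx
    rw [(hd x hx).deriv]
    have hx0 : (0:ℝ) < x := hx.1
    have hx1 : x < 1 := hx.2
    have e1 : (1-x^2) * ((1+x)⁻¹ + (1-x)⁻¹) = 2 := by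
      have hp : (1:ℝ)+x ≠ 0 := by linarith
      have hm : (1:ℝ)-x ≠ 0 := by linarith
      field_simp
      ring
    have hA := Afn_lower (le_of_lt hx0) hx1
    apply div_nonpos_of_nonpos_of_nonneg _ (sq_nonneg x)
    rw [e1]
    nlinarith [hA]

lemma core_u {u v : ℝ} (hu0 : 0 < u) (hu1 : u < 1) (hv0 : 0 ≤ v) (hv1 : v ≤ 1) :
    v * ((1-u^2) * Afn u) ≤ (1-(v*u)^2) * Afn (v*u) := by
  rcases eq_or_lt_of_le hv0 with h | hv0'
  · simp [← h, Afn_zero]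
  · have hvu0 : 0 < v*u := mul_pos hv0' hu0
    have hvu : v*u ≤ u := by nlinarith
    have hq := q_antitone ⟨hvu0, lt_of_le_of_lt hvu hu1⟩ ⟨hu0, hu1⟩ hvu
    have := mul_le_mul_of_nonneg_right hq (le_of_lt hvu0)
    calc v * ((1-u^2) * Afn u) = ((1-u^2) * Afn u / u) * (v*u) := by
          field_simp
      _ ≤ ((1-(v*u)^2) * Afn (v*u) / (v*u)) * (v*u) := this
      _ = (1-(v*u)^2) * Afn (v*u) := by field_simp

lemma Nhalf {w : ℝ} (h1 : -1 < w) (h2 : w < 1) :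
    Real.log (1 - (1-w)/2) - Real.log ((1-w)/2) = Afn w := by
  have e : 1 - (1-w)/2 = (1+w)/2 := by ring
  rw [e, Real.log_div (by linarith) (by norm_num),
    Real.log_div (by linarith) (by norm_num), Afn]
  ring

lemma core_bs {s b : ℝ} (hs0 : 0 ≤ s) (hs1 : s ≤ 1) (hb0 : 0 < b) (hb1 : b < 1/2) :
    s * (b*(1-b)*(Real.log (1-b) - Real.log b)) ≤
    ((1-s)/2 + s*b)*(1 - ((1-s)/2 + s*b)) *
      (Real.log (1 - ((1-s)/2 + s*b)) - Real.log ((1-s)/2 + s*b)) := by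
  set u : ℝ := 1 - 2*b with hu
  have hu0 : 0 < u := by rw [hu]; linarith
  have hu1 : u < 1 := by rw [hu]; linarith
  have hbu : b = (1-u)/2 := by rw [hu]; ring
  have hsu1 : s*u < 1 := lt_of_le_of_lt (by nlinarith) hu1
  have hsu0 : 0 ≤ s*u := mul_nonneg hs0 (le_of_lt hu0)
  have hNb : Real.log (1-b) - Real.log b = Afn u := by
    rw [show (1:ℝ)-b = 1 - (1-u)/2 by rw [hbu], show b = (1-u)/2 from hbu]
    exact Nhalf (by linarith) hu1
  have hc : (1-s)/2 + s*b = (1 - s*u)/2 := by rw [hbu]; ring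
  have hNc : Real.log (1 - ((1-s)/2 + s*b)) - Real.log ((1-s)/2 + s*b) = Afn (s*u) := by
    rw [hc]
    exact Nhalf (by linarith) hsu1
  rw [hNb, hNc, hc]
  have e1 : s * (b*(1-b)*Afn u) = (s * ((1-u^2) * Afn u))/4 := by rw [hbu]; ring
  have e2 : (1 - s*u)/2 * (1 - (1 - s*u)/2) * Afn (s*u) = ((1-(s*u)^2) * Afn (s*u))/4 := by
    ring
  rw [e1, e2]
  exact (div_le_div_iff_of_pos_right (by norm_num)).2 (core_u hu0 hu1 hs0 hs1)

lemma hbin_eq (x : ℝ) : hbin x = (-(x * Real.log x) - (1-x) * Real.log (1-x)) / Real.log 2 := by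
  simp [hbin, Real.logb]
  ring

lemma continuous_hbin : Continuous hbin := by
  have : (fun x => (-(x * Real.log x) - (1-x) * Real.log (1-x)) / Real.log 2) = hbin := by
    funext x; rw [hbin_eq]
  rw [← this]
  apply Continuous.div_const
  apply Continuous.sub
  · exact (Real.continuous_mul_log).neg
  · exact (Real.continuous_mul_log).comp (continuous_const.sub continuous_id)

lemma hbin_hasDerivAt {p : ℝ} (h0 : 0 < p) (h1 : p < 1) :
    HasDerivAt hbin ((Real.log (1-p) - Real.log p) / Real.log 2) p := by
  have e : hbin = fun x => (-(x * Real.log x) - (1-x) * Real.log (1-x)) / Real.log 2 := by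
    funext x; rw [hbin_eq]
  rw [e]
  have d1 : HasDerivAt (fun x : ℝ => x * Real.log x) (Real.log p + 1) p :=
    Real.hasDerivAt_mul_log (ne_of_gt h0)
  have d2 : HasDerivAt (fun x : ℝ => (1-x) * Real.log (1-x)) (-(Real.log (1-p) + 1)) p := by
    have := (Real.hasDerivAt_mul_log (x := 1-p) (by linarith)).comp p
      ((hasDerivAt_id p).neg.const_add 1)
    simpa [Function.comp_def] using this
  have := (d1.neg.sub d2).div_const (Real.log 2)
  exact this.congr_deriv (by ring)

lemma hbin_zero : hbin 0 = 0 := by simp [hbin]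

lemma hbin_half : hbin (1/2) = 1 := by
  rw [hbin, show (1:ℝ) - 1/2 = 1/2 by norm_num, show (1:ℝ)/2 = 2⁻¹ by norm_num,
    Real.logb_inv, Real.logb_self_eq_one (by norm_num)]
  norm_num

lemma hbin_strictMono : StrictMonoOn hbin (Icc 0 (1/2)) := by
  apply strictMonoOn_of_deriv_pos (convex_Icc 0 (1/2)) continuous_hbin.continuousOn
  rw [interior_Icc]
  intro x hx
  rw [(hbin_hasDerivAt hx.1 (by linarith [hx.2])).deriv]
  apply div_pos _ (Real.log_pos (by norm_num))
  rw [sub_pos]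
  exact Real.log_lt_log hx.1 (by linarith [hx.2])

lemma N_hasDerivAt {p : ℝ} (h0 : 0 < p) (h1 : p < 1) :
    HasDerivAt (fun p : ℝ => Real.log (1-p) - Real.log p) (-(1-p)⁻¹ - p⁻¹) p := by
  have d2 : HasDerivAt (fun p : ℝ => Real.log (1-p)) (-(1-p)⁻¹) p := by
    have := (Real.hasDerivAt_log (x := 1-p) (by linarith)).comp p
      ((hasDerivAt_id p).neg.const_add 1)
    simpa [Function.comp_def] using this
  exact d2.sub (Real.hasDerivAt_log (ne_of_gt h0))

lemma bconv_hasDerivAt (a b : ℝ) : HasDerivAt (bconv a) (1-2*a) b := by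
  have h : HasDerivAt (fun y : ℝ => (1-2*a)*y + a) ((1-2*a)*1) b :=
    ((hasDerivAt_id b).const_mul (1-2*a)).add_const a
  have e : (fun y : ℝ => (1-2*a)*y + a) = bconv a := by
    funext y; simp [bconv]; ring
  rw [e] at h
  simpa using h

noncomputable def Dfn (a : ℝ) : ℝ → ℝ := fun b =>
  ((1-2*a) * (Real.log (1 - bconv a b) - Real.log (bconv a b))) /
    (Real.log (1-b) - Real.log b)

lemma Dfn_mono {a : ℝ} (ha0 : 0 ≤ a) (ha2 : a ≤ 1/2) :
    MonotoneOn (Dfn a) (Ioo (0:ℝ) (1/2)) := by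
  have H : ∀ b ∈ Ioo (0:ℝ) (1/2), ∃ E, HasDerivAt (Dfn a) E b ∧ 0 ≤ E := by
    intro b hb
    obtain ⟨hb0, hb2⟩ := hb
    set c := bconv a b with hcdef
    have hc0 : 0 < c := by
      have : c = a*(1-b) + b*(1-a) := rfl
      nlinarith [mul_nonneg ha0 (by linarith : (0:ℝ) ≤ 1-b)]
    have hc2 : c ≤ 1/2 := by
      have : c = a*(1-b) + b*(1-a) := rfl
      nlinarith [mul_nonneg (by linarith : (0:ℝ) ≤ 1-2*a) (by linarith : (0:ℝ) ≤ 1-2*b)]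
    have hNb : 0 < Real.log (1-b) - Real.log b :=
      sub_pos.2 (Real.log_lt_log hb0 (by linarith))
    have hNc : 0 ≤ Real.log (1-c) - Real.log c :=
      sub_nonneg.2 (Real.log_le_log (by linarith) (by linarith))
    have dN : HasDerivAt (fun p : ℝ => Real.log (1-p) - Real.log p) (-(1-c)⁻¹ - c⁻¹) c :=
      N_hasDerivAt hc0 (by linarith)
    have dnum : HasDerivAt
        (fun y => (1-2*a) * (Real.log (1 - bconv a y) - Real.log (bconv a y)))
        ((-(1-c)⁻¹ - c⁻¹) * (1-2*a) * (1-2*a)) b := by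
      have := (dN.comp b (bconv_hasDerivAt a b)).const_mul (1-2*a)
      simpa [mul_comm, mul_assoc, mul_left_comm] using this
    have dden : HasDerivAt (fun p : ℝ => Real.log (1-p) - Real.log p) (-(1-b)⁻¹ - b⁻¹) b :=
      N_hasDerivAt hb0 (by linarith)
    have dD := dnum.div dden (ne_of_gt hNb)
    refine ⟨_, dD, ?_⟩
    apply div_nonneg _ (sq_nonneg _)
    -- numerator nonnegativity
    have ePb : (-(1-b)⁻¹ - b⁻¹) = -(b*(1-b))⁻¹ := by
      field_simp [ne_of_gt hb0, (show (1:ℝ)-b ≠ 0 by linarith)]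
      ring
    have ePc : (-(1-c)⁻¹ - c⁻¹) = -(c*(1-c))⁻¹ := by
      field_simp [ne_of_gt hc0, (show (1:ℝ)-c ≠ 0 by linarith)]
      ring
    have hP : (0:ℝ) < b*(1-b) := by nlinarith
    have hQ : (0:ℝ) < c*(1-c) := by nlinarith
    have key := core_bs (s := 1-2*a) (by linarith) (by linarith) hb0 hb2
    have hCc : (1-(1-2*a))/2 + (1-2*a)*b = c := by
      rw [hcdef, bconv]; ring
    rw [hCc] at key
    set s : ℝ := 1-2*a with hs
    set P : ℝ := b*(1-b) with hPd
    set Q : ℝ := c*(1-c) with hQd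
    set Nb : ℝ := Real.log (1-b) - Real.log b with hNbd
    set Nc : ℝ := Real.log (1-c) - Real.log c with hNcd
    have hs0 : 0 ≤ s := by rw [hs]; linarith
    rw [ePb, ePc]
    have eNUM : -Q⁻¹ * s * s * Nb - s * Nc * -P⁻¹
        = s * (Q * Nc - s * (P * Nb)) * (P*Q)⁻¹ := by
      field_simp
      ring
    calc (0:ℝ) ≤ s * (Q * Nc - s * (P * Nb)) * (P*Q)⁻¹ := by
          apply mul_nonneg (mul_nonneg hs0 _) (inv_nonneg.2 (le_of_lt (mul_pos hP hQ)))
          have : s * (P * Nb) ≤ Q * Nc := by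
            calc s * (P * Nb) = s * (b*(1-b)*Nb) := by rw [hPd]
              _ ≤ c*(1-c)*Nc := key
              _ = Q * Nc := by rw [hQd]
          linarith
      _ = -Q⁻¹ * s * s * Nb - s * Nc * -P⁻¹ := eNUM.symm
  apply monotoneOn_of_deriv_nonneg (convex_Ioo 0 (1/2))
  · intro b hb
    obtain ⟨E, hE, _⟩ := H b hb
    exact hE.differentiableAt.continuousAt.continuousWithinAt
  · rw [interior_Ioo]
    intro b hb
    obtain ⟨E, hE, _⟩ := H b hb
    exact hE.differentiableAt.differentiableWithinAt
  · rw [interior_Ioo]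
    intro b hb
    obtain ⟨E, hE, hE0⟩ := H b hb
    rw [hE.deriv]
    exact hE0

/-- `ψ_t(x) = h(h⁻¹(1-t) ⋆ h⁻¹(x)) - (1-t)` is convex on `[0,1]`, with `ψ_t(0)=0`,
`ψ_t(1)=t`, hence `ψ_t(x) ≤ t·x` on `[0,1]`. -/
theorem psi_convex_and_le (hinv : ℝ → ℝ)
    (hhinv : ∀ y ∈ Set.Icc (0:ℝ) 1, hinv y ∈ Set.Icc (0:ℝ) (1/2) ∧ hbin (hinv y) = y)
    (t : ℝ) (ht : t ∈ Set.Icc (0:ℝ) 1) :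
    ConvexOn ℝ (Set.Icc (0:ℝ) 1) (fun x => hbin (bconv (hinv (1 - t)) (hinv x)) - (1 - t)) ∧
    (hbin (bconv (hinv (1 - t)) (hinv 0)) - (1 - t) = 0) ∧
    (hbin (bconv (hinv (1 - t)) (hinv 1)) - (1 - t) = t) ∧
    ∀ x ∈ Set.Icc (0:ℝ) 1, hbin (bconv (hinv (1 - t)) (hinv x)) - (1 - t) ≤ t * x := by
  obtain ⟨ht0, ht1⟩ := ht
  have h1t : (1:ℝ) - t ∈ Icc (0:ℝ) 1 := ⟨by linarith, by linarith⟩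
  obtain ⟨ha, hba⟩ := hhinv (1-t) h1t
  set a := hinv (1 - t) with hadef
  -- basic facts about hbin and hinv
  have hmem0 : (0:ℝ) ∈ Icc (0:ℝ) (1/2) := ⟨le_refl 0, by norm_num⟩
  have hmemh : (1:ℝ)/2 ∈ Icc (0:ℝ) (1/2) := ⟨by norm_num, le_refl _⟩
  have hbin_mem : ∀ p ∈ Icc (0:ℝ) (1/2), hbin p ∈ Icc (0:ℝ) 1 := by
    intro p hp
    constructor
    · rw [← hbin_zero]; exact hbin_strictMono.monotoneOn hmem0 hp hp.1
    · rw [← hbin_half]; exact hbin_strictMono.monotoneOn hp hmemh hp.2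
  have hinj := hbin_strictMono.injOn
  have hleft : ∀ p ∈ Icc (0:ℝ) (1/2), hinv (hbin p) = p := by
    intro p hp
    exact hinj (hhinv _ (hbin_mem p hp)).1 hp (hhinv _ (hbin_mem p hp)).2
  have hinv0 : hinv 0 = 0 := by
    have := hleft 0 hmem0; rwa [hbin_zero] at this
  have hinv1 : hinv 1 = 1/2 := by
    have := hleft (1/2) hmemh; rwa [hbin_half] at this
  have hinvmono : StrictMonoOn hinv (Icc (0:ℝ) 1) := by
    intro x hx y hy hxy
    by_contra h
    push_neg at h
    have := hbin_strictMono.monotoneOn (hhinv y hy).1 (hhinv x hx).1 h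
    rw [(hhinv y hy).2, (hhinv x hx).2] at this
    linarith
  have hinv_Ioo : ∀ x ∈ Ioo (0:ℝ) 1, hinv x ∈ Ioo (0:ℝ) (1/2) := by
    intro x hx
    constructor
    · rw [← hinv0]
      exact hinvmono ⟨le_refl 0, by norm_num⟩ ⟨le_of_lt hx.1, le_of_lt hx.2⟩ hx.1
    · rw [← hinv1]
      exact hinvmono ⟨le_of_lt hx.1, le_of_lt hx.2⟩ ⟨by norm_num, le_refl 1⟩ hx.2
  have himage : hinv '' (Icc (0:ℝ) 1) = Icc (0:ℝ) (1/2) := by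
    ext p
    constructor
    · rintro ⟨y, hy, rfl⟩
      exact (hhinv y hy).1
    · intro hp
      exact ⟨hbin p, hbin_mem p hp, hleft p hp⟩
  -- continuity of hinv on [0,1]
  have hinv_contOn : ContinuousOn hinv (Icc (0:ℝ) 1) := by
    intro x hx
    have hunion : Icc (0:ℝ) 1 = (Icc (0:ℝ) 1 ∩ Iic x) ∪ (Icc (0:ℝ) 1 ∩ Ici x) := by
      ext y
      simp only [mem_union, mem_inter_iff, mem_Iic, mem_Ici]
      constructor
      · intro hy; rcases le_total y x with h | h
        · exact Or.inl ⟨hy, h⟩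
        · exact Or.inr ⟨hy, h⟩
      · rintro (⟨hy, _⟩ | ⟨hy, _⟩) <;> exact hy
    rw [hunion]
    apply ContinuousWithinAt.union
    · rcases eq_or_lt_of_le hx.1 with h0 | h0
      · have : Icc (0:ℝ) 1 ∩ Iic x = {x} := by
          ext y
          simp only [mem_inter_iff, mem_Icc, mem_Iic, mem_singleton_iff]
          constructor
          · rintro ⟨⟨h1, _⟩, h2⟩; rw [← h0] at h2 ⊢; linarith
          · rintro rfl; exact ⟨hx, le_refl _⟩
        rw [this]
        exact continuousWithinAt_singleton
      · apply ContinuousWithinAt.mono _ inter_subset_right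
        apply hinvmono.continuousWithinAt_left_of_image_mem_nhdsWithin
        · exact Icc_mem_nhdsLE_of_mem ⟨h0, hx.2⟩
        · rw [himage]
          apply Icc_mem_nhdsLE_of_mem
          constructor
          · rw [← hinv0]
            exact hinvmono ⟨le_refl 0, by norm_num⟩ hx h0
          · exact (hhinv x hx).1.2
    · rcases eq_or_lt_of_le hx.2 with h1 | h1
      · have : Icc (0:ℝ) 1 ∩ Ici x = {x} := by
          ext y
          simp only [mem_inter_iff, mem_Icc, mem_Ici, mem_singleton_iff]
          constructor
          · rintro ⟨⟨_, h2⟩, h3⟩; rw [h1] at h3 ⊢; linarith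
          · rintro rfl; exact ⟨hx, le_refl _⟩
        rw [this]
        exact continuousWithinAt_singleton
      · apply ContinuousWithinAt.mono _ inter_subset_right
        apply hinvmono.continuousWithinAt_right_of_image_mem_nhdsWithin
        · exact Icc_mem_nhdsGE_of_mem ⟨hx.1, h1⟩
        · rw [himage]
          apply Icc_mem_nhdsGE_of_mem
          constructor
          · exact (hhinv x hx).1.1
          · rw [← hinv1]
            exact hinvmono hx ⟨by norm_num, le_refl 1⟩ h1
  -- derivative of hinv at interior points
  have hinv_hasDeriv : ∀ x ∈ Ioo (0:ℝ) 1,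
      HasDerivAt hinv (((Real.log (1 - hinv x) - Real.log (hinv x)) / Real.log 2)⁻¹) x := by
    intro x hx
    have hb := hinv_Ioo x hx
    apply HasDerivAt.of_local_left_inverse
    · exact hinv_contOn.continuousAt (Icc_mem_nhds hx.1 hx.2)
    · exact hbin_hasDerivAt hb.1 (by linarith [hb.2])
    · apply div_ne_zero
      · exact ne_of_gt (sub_pos.2 (Real.log_lt_log hb.1
          (by linarith [hb.2] : hinv x < 1 - hinv x)))
      · exact Real.log_ne_zero_of_pos_of_ne_one (by norm_num) (by norm_num)
    · filter_upwards [Ioo_mem_nhds hx.1 hx.2] with y hy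
      exact (hhinv y (Ioo_subset_Icc_self hy)).2
  set ψ : ℝ → ℝ := fun x => hbin (bconv a (hinv x)) - (1 - t) with hψ
  -- derivative of ψ at interior points
  have psi_hasDeriv : ∀ x ∈ Ioo (0:ℝ) 1, HasDerivAt ψ (Dfn a (hinv x)) x := by
    intro x hx
    have hb := hinv_Ioo x hx
    set b := hinv x with hbdef
    set c := bconv a b with hcdef
    have hc0 : 0 < c := by
      have : c = a*(1-b) + b*(1-a) := rfl
      nlinarith [mul_nonneg ha.1 (by linarith [hb.2] : (0:ℝ) ≤ 1-b), hb.1, ha.2]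
    have hc2 : c ≤ 1/2 := by
      have : c = a*(1-b) + b*(1-a) := rfl
      nlinarith [mul_nonneg (by linarith [ha.2] : (0:ℝ) ≤ 1-2*a)
        (by linarith [hb.2] : (0:ℝ) ≤ 1-2*b)]
    have hNb : 0 < Real.log (1-b) - Real.log b :=
      sub_pos.2 (Real.log_lt_log hb.1 (by linarith [hb.2]))
    have d1 : HasDerivAt hbin ((Real.log (1-c) - Real.log c) / Real.log 2) c :=
      hbin_hasDerivAt hc0 (by linarith)
    have d2 : HasDerivAt (bconv a) (1-2*a) b := bconv_hasDerivAt a b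
    have d3 := hinv_hasDeriv x hx
    have dcomp := ((d1.comp b d2).comp x d3).sub_const (1 - t)
    have heq : (Real.log (1-c) - Real.log c) / Real.log 2 * (1-2*a) *
        ((Real.log (1 - b) - Real.log b) / Real.log 2)⁻¹ = Dfn a b := by
      rw [Dfn]
      have hl2 : Real.log 2 ≠ 0 :=
        Real.log_ne_zero_of_pos_of_ne_one (by norm_num) (by norm_num)
      rw [← hcdef]
      field_simp
    rw [heq] at dcomp
    exact dcomp
  -- convexity
  have conv : ConvexOn ℝ (Icc (0:ℝ) 1) ψ := by
    apply MonotoneOn.convexOn_of_deriv (convex_Icc 0 1)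
    · have cb : Continuous (bconv a) := by
        unfold bconv; continuity
      exact ((continuous_hbin.comp cb).comp_continuousOn hinv_contOn).sub continuousOn_const
    · rw [interior_Icc]
      intro x hx
      exact (psi_hasDeriv x hx).differentiableAt.differentiableWithinAt
    · rw [interior_Icc]
      intro x hx y hy hxy
      rw [(psi_hasDeriv x hx).deriv, (psi_hasDeriv y hy).deriv]
      exact Dfn_mono ha.1 ha.2 (hinv_Ioo x hx) (hinv_Ioo y hy)
        (hinvmono.monotoneOn (Ioo_subset_Icc_self hx) (Ioo_subset_Icc_self hy) hxy)
  -- endpoint values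
  have hpsi0 : ψ 0 = 0 := by
    rw [hψ]
    simp only
    rw [hinv0, show bconv a 0 = a by simp [bconv], hba]
    ring
  have hpsi1 : ψ 1 = t := by
    rw [hψ]
    simp only
    rw [hinv1, show bconv a (1/2) = 1/2 by rw [bconv]; ring, hbin_half]
    ring
  refine ⟨conv, hpsi0, hpsi1, ?_⟩
  intro x hx
  have h0m : (0:ℝ) ∈ Icc (0:ℝ) 1 := ⟨le_refl 0, by norm_num⟩
  have h1m : (1:ℝ) ∈ Icc (0:ℝ) 1 := ⟨by norm_num, le_refl 1⟩
  have key := conv.2 h0m h1m (by linarith [hx.2] : (0:ℝ) ≤ 1-x) hx.1 (by ring)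
  simp only [smul_eq_mul, mul_zero, mul_one, zero_add] at key
  have : ψ x ≤ (1-x) * ψ 0 + x * ψ 1 := key
  rw [hpsi0, hpsi1] at this
  calc hbin (bconv a (hinv x)) - (1 - t) = ψ x := rfl
    _ ≤ (1-x) * 0 + x * t := this
    _ = t * x := by ring
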